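/- Let h₁,…,h_k : [0,1]^2 → ℝ be continuous functions. Let p and q be continuous strictly positive copula densities of minimum-information form, i.e., p(x,y) = exp(Σᵢ θᵢ hᵢ(x,y) + a_p(x) + b_p(y)) and q(x,y) = exp(Σᵢ θ'ᵢ hᵢ(x,y) + a_q(x) + b_q(y)) for some parameters θ, θ' ∈ ℝ^k and continuous functions a_p, b_p, a_q, b_q : [0,1] → ℝ, with both p and q satisfying the copula marginal conditions. If S(p,q) = S(p,p) (both finite), then p = q. That is, the conditional KL score is strictly proper relative to the minimum information copula model. -/

import Mathlib

open Set MeasureTheory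

/-- The conditional Kullback–Leibler (CKL) score. -/
noncomputable def condKLScore (q : ℝ → ℝ → ℝ) (x1 y1 x2 y2 : ℝ) : ℝ :=
  -Real.log (q x1 y1 * q x2 y2 / (q x1 y1 * q x2 y2 + q x1 y2 * q x2 y1))

/-- The unit box `[0,1]⁴` in `ℝ × ℝ × ℝ × ℝ`, for `(x¹, y¹, x², y²)`. -/
def unitBox4 : Set (ℝ × ℝ × ℝ × ℝ) :=
  Icc (0:ℝ) 1 ×ˢ (Icc (0:ℝ) 1 ×ˢ (Icc (0:ℝ) 1 ×ˢ Icc (0:ℝ) 1))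

/-- The integrand of the expected conditional KL score
`S(x¹,y¹,x²,y²,q) · p(x¹,y¹) p(x²,y²)`. -/
noncomputable def cklIntegrand (p q : ℝ → ℝ → ℝ) (w : ℝ × ℝ × ℝ × ℝ) : ℝ :=
  condKLScore q w.1 w.2.1 w.2.2.1 w.2.2.2 * (p w.1 w.2.1 * p w.2.2.1 w.2.2.2)

/-- The expected conditional KL score `S(p,q)`. -/
noncomputable def expCondKLScore (p q : ℝ → ℝ → ℝ) : ℝ :=
  ∫ w in unitBox4, cklIntegrand p q w

/-! ### Auxiliary lemmas -/

/-- Gibbs-type inequality for two-point measures. -/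
lemma gibbs_aux {a b c d : ℝ} (ha : 0 < a) (hb : 0 < b) (hc : 0 < c) (hd : 0 < d) :
    0 ≤ a * (Real.log (a / (a + b)) - Real.log (c / (c + d)))
      + b * (Real.log (b / (a + b)) - Real.log (d / (c + d))) ∧
    (a * (Real.log (a / (a + b)) - Real.log (c / (c + d)))
      + b * (Real.log (b / (a + b)) - Real.log (d / (c + d))) = 0 → a * d = b * c) := by
  have hs : (0:ℝ) < a + b := by linarith
  have ht : (0:ℝ) < c + d := by linarith
  set x := (a + b) * c / (a * (c + d)) with hxdef
  set y := (a + b) * d / (b * (c + d)) with hydef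
  have hx : 0 < x := by positivity
  have hy : 0 < y := by positivity
  have e1 : Real.log (a / (a + b)) - Real.log (c / (c + d)) = -Real.log x := by
    rw [hxdef, Real.log_div (by positivity : ((a+b)*c) ≠ 0) (by positivity : (a*(c+d)) ≠ 0),
      Real.log_mul hs.ne' hc.ne', Real.log_mul ha.ne' ht.ne',
      Real.log_div ha.ne' hs.ne', Real.log_div hc.ne' ht.ne']
    ring
  have e2 : Real.log (b / (a + b)) - Real.log (d / (c + d)) = -Real.log y := by
    rw [hydef, Real.log_div (by positivity : ((a+b)*d) ≠ 0) (by positivity : (b*(c+d)) ≠ 0),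
      Real.log_mul hs.ne' hd.ne', Real.log_mul hb.ne' ht.ne',
      Real.log_div hb.ne' hs.ne', Real.log_div hd.ne' ht.ne']
    ring
  have hax : a * x = (a + b) * c / (c + d) := by
    rw [hxdef]; field_simp
  have hby : b * y = (a + b) * d / (c + d) := by
    rw [hydef]; field_simp
  have hsum : a * x + b * y = a + b := by
    rw [hax, hby]; field_simp
  have lb1 : a - a * x ≤ a * (-Real.log x) := by
    have := Real.log_le_sub_one_of_pos hx
    nlinarith
  have lb2 : b - b * y ≤ b * (-Real.log y) := by
    have := Real.log_le_sub_one_of_pos hy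
    nlinarith
  constructor
  · rw [e1, e2]; nlinarith
  · intro h0
    rw [e1, e2] at h0
    have hx1 : x = 1 := by
      by_contra hne
      have := Real.log_lt_sub_one_of_pos hx hne
      nlinarith
    have : (a + b) * c = a * (c + d) := by
      have : a * x = a * 1 := by rw [hx1]
      rw [hax] at this
      field_simp at this
      linarith
    nlinarith

/-- A nonnegative continuous function with zero integral on a "thick" set vanishes. -/
lemma eq_zero_of_setIntegral_zero {α : Type*} [MeasureSpace α] [PseudoMetricSpace α]
    [OpensMeasurableSpace α] {s : Set α} (hs : MeasurableSet s) (hsfin : volume s ≠ ⊤)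
    (hball : ∀ w ∈ s, ∀ δ : ℝ, 0 < δ → 0 < volume (s ∩ Metric.ball w δ))
    {f : α → ℝ} (hf : ContinuousOn f s) (hnn : ∀ w ∈ s, 0 ≤ f w)
    (hint : IntegrableOn f s) (hzero : ∫ w in s, f w = 0) :
    ∀ w ∈ s, f w = 0 := by
  intro w hw
  by_contra hne
  have hpos : 0 < f w := lt_of_le_of_ne (hnn w hw) (Ne.symm hne)
  have h1 : ∀ᶠ y in nhdsWithin w s, f w / 2 < f y :=
    (hf w hw).eventually (eventually_gt_nhds (half_lt_self hpos))
  obtain ⟨δ, hδ, hsub⟩ := Metric.mem_nhdsWithin_iff.mp h1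
  set S := s ∩ Metric.ball w δ with hS
  have hSmeas : MeasurableSet S := hs.inter Metric.isOpen_ball.measurableSet
  have hSpos : 0 < volume S := hball w hw δ hδ
  have hSfin : volume S ≠ ⊤ :=
    (lt_of_le_of_lt (measure_mono inter_subset_left) (lt_top_iff_ne_top.2 hsfin)).ne
  have hge : (f w / 2) * (volume S).toReal ≤ ∫ x in S, f x :=
    setIntegral_ge_of_const_le_real hSmeas hSfin
      (fun x hx => le_of_lt (hsub ⟨hx.2, hx.1⟩))
      (hint.mono_set inter_subset_left)
  have hmono : ∫ x in S, f x ≤ ∫ x in s, f x := by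
    apply setIntegral_mono_set hint
    · exact (ae_restrict_iff' hs).2 (Filter.Eventually.of_forall hnn)
    · exact HasSubset.Subset.eventuallyLE inter_subset_left
  have htr : 0 < (volume S).toReal := ENNReal.toReal_pos hSpos.ne' hSfin
  nlinarith

lemma Icc_inter_ball_pos : ∀ x ∈ Icc (0:ℝ) 1, ∀ δ : ℝ, 0 < δ →
    0 < volume (Icc (0:ℝ) 1 ∩ Metric.ball x δ) := by
  intro x hx δ hδ
  have hsub : Ioo (max 0 (x - δ)) (min 1 (x + δ)) ⊆ Icc (0:ℝ) 1 ∩ Metric.ball x δ := by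
    intro z hz
    rw [Real.ball_eq_Ioo]
    constructor
    · constructor
      · exact le_of_lt (lt_of_le_of_lt (le_max_left _ _) hz.1)
      · exact le_of_lt (lt_of_lt_of_le hz.2 (min_le_left _ _))
    · exact ⟨lt_of_le_of_lt (le_max_right _ _) hz.1, lt_of_lt_of_le hz.2 (min_le_right _ _)⟩
  have hlt : max 0 (x - δ) < min 1 (x + δ) := by
    rw [lt_min_iff, max_lt_iff, max_lt_iff]
    exact ⟨⟨zero_lt_one, by linarith [hx.2]⟩, ⟨by linarith [hx.1], by linarith⟩⟩
  calc (0:ENNReal) < volume (Ioo (max 0 (x - δ)) (min 1 (x + δ))) := by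
        rw [Real.volume_Ioo]; exact ENNReal.ofReal_pos.2 (by linarith)
    _ ≤ _ := measure_mono hsub

lemma box2_ball_pos : ∀ z ∈ (Icc (0:ℝ) 1 ×ˢ Icc (0:ℝ) 1), ∀ δ : ℝ, 0 < δ →
    0 < volume ((Icc (0:ℝ) 1 ×ˢ Icc (0:ℝ) 1) ∩ Metric.ball z δ) := by
  rintro ⟨x, y⟩ ⟨hx, hy⟩ δ hδ
  rw [← ball_prod_same, Set.prod_inter_prod, Measure.volume_eq_prod, Measure.prod_prod]
  exact ENNReal.mul_pos (Icc_inter_ball_pos x hx δ hδ).ne' (Icc_inter_ball_pos y hy δ hδ).ne'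

lemma box4_ball_pos : ∀ w ∈ unitBox4, ∀ δ : ℝ, 0 < δ →
    0 < volume (unitBox4 ∩ Metric.ball w δ) := by
  rintro ⟨x1, y1, x2, y2⟩ ⟨h1, h2, h3, h4⟩ δ hδ
  show (0:ENNReal) < volume ((Icc (0:ℝ) 1 ×ˢ (Icc (0:ℝ) 1 ×ˢ (Icc (0:ℝ) 1 ×ˢ Icc (0:ℝ) 1)))
    ∩ Metric.ball (x1, y1, x2, y2) δ)
  rw [← ball_prod_same, ← ball_prod_same, ← ball_prod_same,
    Set.prod_inter_prod, Set.prod_inter_prod, Set.prod_inter_prod,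
    Measure.volume_eq_prod, Measure.prod_prod, Measure.volume_eq_prod, Measure.prod_prod,
    Measure.volume_eq_prod, Measure.prod_prod]
  exact ENNReal.mul_pos (Icc_inter_ball_pos x1 h1 δ hδ).ne'
    (ENNReal.mul_pos (Icc_inter_ball_pos y1 h2 δ hδ).ne'
      (ENNReal.mul_pos (Icc_inter_ball_pos x2 h3 δ hδ).ne'
        (Icc_inter_ball_pos y2 h4 δ hδ).ne').ne').ne'

/-- The coordinate permutation `(x1, y1, x2, y2) ↦ (x1, y2, x2, y1)`. -/
def swapYfn (w : ℝ × ℝ × ℝ × ℝ) : ℝ × ℝ × ℝ × ℝ := (w.1, w.2.2.2, w.2.2.1, w.2.1)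

def swapYEquiv : (ℝ × ℝ × ℝ × ℝ) ≃ᵐ (ℝ × ℝ × ℝ × ℝ) where
  toFun := swapYfn
  invFun := swapYfn
  left_inv _ := rfl
  right_inv _ := rfl
  measurable_toFun := show Measurable swapYfn by unfold swapYfn; fun_prop
  measurable_invFun := show Measurable swapYfn by unfold swapYfn; fun_prop

lemma mp_swap : MeasurePreserving (Prod.swap : ℝ × ℝ → ℝ × ℝ) volume volume := by
  rw [Measure.volume_eq_prod]; exact Measure.measurePreserving_swap

lemma swapY_measurePreserving : MeasurePreserving swapYfn volume volume := by
  have inner : MeasurePreserving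
      (fun v : ℝ × ℝ × ℝ => (v.2.2, v.2.1, v.1)) volume volume := by
    have h1 : MeasurePreserving (Prod.map (id : ℝ → ℝ) (Prod.swap : ℝ × ℝ → ℝ × ℝ))
        volume volume := (MeasurePreserving.id volume).prod mp_swap
    have h2 : MeasurePreserving
        (MeasurableEquiv.prodAssoc.symm : ℝ × ℝ × ℝ ≃ᵐ (ℝ × ℝ) × ℝ) volume volume :=
      MeasureTheory.volume_preserving_prodAssoc.symm MeasurableEquiv.prodAssoc
    have h3 : MeasurePreserving (Prod.map (Prod.swap : ℝ × ℝ → ℝ × ℝ) (id : ℝ → ℝ))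
        volume volume := mp_swap.prod (MeasurePreserving.id volume)
    have h4 : MeasurePreserving
        (MeasurableEquiv.prodAssoc : (ℝ × ℝ) × ℝ ≃ᵐ ℝ × ℝ × ℝ) volume volume :=
      MeasureTheory.volume_preserving_prodAssoc
    exact (((h1.comp h4).comp h3).comp h2).comp h1
  exact (MeasurePreserving.id volume).prod inner

lemma swapY_emb : MeasurableEmbedding swapYfn := swapYEquiv.measurableEmbedding

lemma swapY_preimage_box : swapYfn ⁻¹' unitBox4 = unitBox4 := by
  ext ⟨x1, y1, x2, y2⟩
  simp [swapYfn, unitBox4, Prod.le_def]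
  tauto

lemma swap_setIntegral (f : (ℝ × ℝ × ℝ × ℝ) → ℝ) :
    ∫ w in unitBox4, f (swapYfn w) = ∫ w in unitBox4, f w := by
  have := swapY_measurePreserving.setIntegral_preimage_emb swapY_emb f unitBox4
  rwa [swapY_preimage_box] at this

lemma swap_integrableOn {f : (ℝ × ℝ × ℝ × ℝ) → ℝ} (hf : IntegrableOn f unitBox4) :
    IntegrableOn (fun w => f (swapYfn w)) unitBox4 := by
  have := (swapY_measurePreserving.integrableOn_comp_preimage swapY_emb
    (f := f) (s := unitBox4)).mpr hf
  rwa [swapY_preimage_box] at this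

noncomputable def boxA (p : ℝ → ℝ → ℝ) (w : ℝ × ℝ × ℝ × ℝ) : ℝ :=
  p w.1 w.2.1 * p w.2.2.1 w.2.2.2

noncomputable def boxB (p : ℝ → ℝ → ℝ) (w : ℝ × ℝ × ℝ × ℝ) : ℝ :=
  p w.1 w.2.2.2 * p w.2.2.1 w.2.1

noncomputable def gibbsG (p q : ℝ → ℝ → ℝ) (w : ℝ × ℝ × ℝ × ℝ) : ℝ :=
  boxA p w * (Real.log (boxA p w / (boxA p w + boxB p w))
      - Real.log (boxA q w / (boxA q w + boxB q w)))
    + boxB p w * (Real.log (boxB p w / (boxA p w + boxB p w))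
      - Real.log (boxB q w / (boxA q w + boxB q w)))

lemma ckl_combo_eq (p q : ℝ → ℝ → ℝ) (w : ℝ × ℝ × ℝ × ℝ) :
    cklIntegrand p q w + cklIntegrand p q (swapYfn w)
      - cklIntegrand p p w - cklIntegrand p p (swapYfn w) = gibbsG p q w := by
  simp only [cklIntegrand, condKLScore, swapYfn, gibbsG, boxA, boxB]
  ring_nf

lemma contOn_log_div {α : Type*} [TopologicalSpace α] {N D : α → ℝ} {s : Set α}
    (hN : ContinuousOn N s) (hD : ContinuousOn D s)
    (hNpos : ∀ w ∈ s, 0 < N w) (hDpos : ∀ w ∈ s, 0 < D w) :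
    ContinuousOn (fun w => Real.log (N w / D w)) s := by
  apply ContinuousOn.log
  · exact hN.div hD fun w hw => (hDpos w hw).ne'
  · intro w hw
    have h1 := hNpos w hw
    have h2 := hDpos w hw
    positivity

/-- The conditional KL score is strictly proper relative to the minimum
information copula model: if `p` and `q` are continuous copula densities of
minimum-information form built from continuous feature functions `h₁,…,h_k`,
and `S(p,q) = S(p,p)` (both finite), then `p = q` on `[0,1]²`. -/
theorem condKLScore_strictly_proper_min_info
    (k : ℕ) (h : Fin k → ℝ → ℝ → ℝ)
    (hh_cont : ∀ i, ContinuousOn (fun z : ℝ × ℝ => h i z.1 z.2) (Icc (0:ℝ) 1 ×ˢ Icc (0:ℝ) 1))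
    (θ θ' : Fin k → ℝ) (ap bp aq bq : ℝ → ℝ)
    (hap : ContinuousOn ap (Icc (0:ℝ) 1)) (hbp : ContinuousOn bp (Icc (0:ℝ) 1))
    (haq : ContinuousOn aq (Icc (0:ℝ) 1)) (hbq : ContinuousOn bq (Icc (0:ℝ) 1))
    (p q : ℝ → ℝ → ℝ)
    (hp_form : ∀ x ∈ Icc (0:ℝ) 1, ∀ y ∈ Icc (0:ℝ) 1,
      p x y = Real.exp ((∑ i, θ i * h i x y) + ap x + bp y))
    (hq_form : ∀ x ∈ Icc (0:ℝ) 1, ∀ y ∈ Icc (0:ℝ) 1,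
      q x y = Real.exp ((∑ i, θ' i * h i x y) + aq x + bq y))
    (hp_marg1 : ∀ x ∈ Icc (0:ℝ) 1, ∫ y in Icc (0:ℝ) 1, p x y = 1)
    (hp_marg2 : ∀ y ∈ Icc (0:ℝ) 1, ∫ x in Icc (0:ℝ) 1, p x y = 1)
    (hq_marg1 : ∀ x ∈ Icc (0:ℝ) 1, ∫ y in Icc (0:ℝ) 1, q x y = 1)
    (hq_marg2 : ∀ y ∈ Icc (0:ℝ) 1, ∫ x in Icc (0:ℝ) 1, q x y = 1)
    (hfin_pq : IntegrableOn (cklIntegrand p q) unitBox4)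
    (hfin_pp : IntegrableOn (cklIntegrand p p) unitBox4)
    (heq : expCondKLScore p q = expCondKLScore p p) :
    ∀ x ∈ Icc (0:ℝ) 1, ∀ y ∈ Icc (0:ℝ) 1, p x y = q x y := by
  have h01 : (0:ℝ) ∈ Icc (0:ℝ) 1 := by norm_num
  -- positivity of p and q on the box
  have hp_pos : ∀ x ∈ Icc (0:ℝ) 1, ∀ y ∈ Icc (0:ℝ) 1, 0 < p x y := fun x hx y hy => by
    rw [hp_form x hx y hy]; exact Real.exp_pos _
  have hq_pos : ∀ x ∈ Icc (0:ℝ) 1, ∀ y ∈ Icc (0:ℝ) 1, 0 < q x y := fun x hx y hy => by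
    rw [hq_form x hx y hy]; exact Real.exp_pos _
  -- continuity of p and q on the box
  have hp_cont : ContinuousOn (fun z : ℝ × ℝ => p z.1 z.2) (Icc (0:ℝ) 1 ×ˢ Icc (0:ℝ) 1) := by
    have hsum : ContinuousOn (fun z : ℝ × ℝ =>
        Real.exp ((∑ i, θ i * h i z.1 z.2) + ap z.1 + bp z.2)) (Icc (0:ℝ) 1 ×ˢ Icc (0:ℝ) 1) := by
      apply Real.continuous_exp.comp_continuousOn
      apply ContinuousOn.add
      apply ContinuousOn.add
      · exact continuousOn_finset_sum _ fun i _ => continuousOn_const.mul (hh_cont i)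
      · exact hap.comp continuous_fst.continuousOn fun z hz => hz.1
      · exact hbp.comp continuous_snd.continuousOn fun z hz => hz.2
    exact hsum.congr fun z hz => hp_form z.1 hz.1 z.2 hz.2
  have hq_cont : ContinuousOn (fun z : ℝ × ℝ => q z.1 z.2) (Icc (0:ℝ) 1 ×ˢ Icc (0:ℝ) 1) := by
    have hsum : ContinuousOn (fun z : ℝ × ℝ =>
        Real.exp ((∑ i, θ' i * h i z.1 z.2) + aq z.1 + bq z.2)) (Icc (0:ℝ) 1 ×ˢ Icc (0:ℝ) 1) := by
      apply Real.continuous_exp.comp_continuousOn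
      apply ContinuousOn.add
      apply ContinuousOn.add
      · exact continuousOn_finset_sum _ fun i _ => continuousOn_const.mul (hh_cont i)
      · exact haq.comp continuous_fst.continuousOn fun z hz => hz.1
      · exact hbq.comp continuous_snd.continuousOn fun z hz => hz.2
    exact hsum.congr fun z hz => hq_form z.1 hz.1 z.2 hz.2
  -- box facts
  have hbox4_meas : MeasurableSet unitBox4 :=
    (measurableSet_Icc.prod (measurableSet_Icc.prod (measurableSet_Icc.prod measurableSet_Icc)))
  have hbox4_cpt : IsCompact unitBox4 :=
    (isCompact_Icc.prod (isCompact_Icc.prod (isCompact_Icc.prod isCompact_Icc)))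
  have hbox4_fin : volume unitBox4 ≠ ⊤ := hbox4_cpt.measure_lt_top.ne
  have hbox2_meas : MeasurableSet (Icc (0:ℝ) 1 ×ˢ Icc (0:ℝ) 1) :=
    measurableSet_Icc.prod measurableSet_Icc
  have hbox2_cpt : IsCompact (Icc (0:ℝ) 1 ×ˢ Icc (0:ℝ) 1) := isCompact_Icc.prod isCompact_Icc
  have hbox2_fin : volume (Icc (0:ℝ) 1 ×ˢ Icc (0:ℝ) 1) ≠ ⊤ := hbox2_cpt.measure_lt_top.ne
  -- membership components
  have hmem : ∀ w ∈ unitBox4, w.1 ∈ Icc (0:ℝ) 1 ∧ w.2.1 ∈ Icc (0:ℝ) 1 ∧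
      w.2.2.1 ∈ Icc (0:ℝ) 1 ∧ w.2.2.2 ∈ Icc (0:ℝ) 1 := fun w hw =>
    ⟨hw.1, hw.2.1, hw.2.2.1, hw.2.2.2⟩
  -- continuity of boxA/boxB for p and q
  have hcomp : ∀ (r : ℝ → ℝ → ℝ), ContinuousOn (fun z : ℝ × ℝ => r z.1 z.2)
      (Icc (0:ℝ) 1 ×ˢ Icc (0:ℝ) 1) →
      ContinuousOn (boxA r) unitBox4 ∧ ContinuousOn (boxB r) unitBox4 := by
    intro r hr
    constructor
    · apply ContinuousOn.mul
      · exact hr.comp (Continuous.continuousOn (by fun_prop :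
          Continuous fun w : ℝ × ℝ × ℝ × ℝ => (w.1, w.2.1)))
          fun w hw => ⟨(hmem w hw).1, (hmem w hw).2.1⟩
      · exact hr.comp (Continuous.continuousOn (by fun_prop :
          Continuous fun w : ℝ × ℝ × ℝ × ℝ => (w.2.2.1, w.2.2.2)))
          fun w hw => ⟨(hmem w hw).2.2.1, (hmem w hw).2.2.2⟩
    · apply ContinuousOn.mul
      · exact hr.comp (Continuous.continuousOn (by fun_prop :
          Continuous fun w : ℝ × ℝ × ℝ × ℝ => (w.1, w.2.2.2)))
          fun w hw => ⟨(hmem w hw).1, (hmem w hw).2.2.2⟩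
      · exact hr.comp (Continuous.continuousOn (by fun_prop :
          Continuous fun w : ℝ × ℝ × ℝ × ℝ => (w.2.2.1, w.2.1)))
          fun w hw => ⟨(hmem w hw).2.2.1, (hmem w hw).2.1⟩
  obtain ⟨hAp_cont, hBp_cont⟩ := hcomp p hp_cont
  obtain ⟨hAq_cont, hBq_cont⟩ := hcomp q hq_cont
  have hAp_pos : ∀ w ∈ unitBox4, 0 < boxA p w := fun w hw => mul_pos
    (hp_pos _ (hmem w hw).1 _ (hmem w hw).2.1)
    (hp_pos _ (hmem w hw).2.2.1 _ (hmem w hw).2.2.2)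
  have hBp_pos : ∀ w ∈ unitBox4, 0 < boxB p w := fun w hw => mul_pos
    (hp_pos _ (hmem w hw).1 _ (hmem w hw).2.2.2)
    (hp_pos _ (hmem w hw).2.2.1 _ (hmem w hw).2.1)
  have hAq_pos : ∀ w ∈ unitBox4, 0 < boxA q w := fun w hw => mul_pos
    (hq_pos _ (hmem w hw).1 _ (hmem w hw).2.1)
    (hq_pos _ (hmem w hw).2.2.1 _ (hmem w hw).2.2.2)
  have hBq_pos : ∀ w ∈ unitBox4, 0 < boxB q w := fun w hw => mul_pos
    (hq_pos _ (hmem w hw).1 _ (hmem w hw).2.2.2)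
    (hq_pos _ (hmem w hw).2.2.1 _ (hmem w hw).2.1)
  -- continuity of gibbsG
  have hGcont : ContinuousOn (gibbsG p q) unitBox4 := by
    unfold gibbsG
    apply ContinuousOn.add
    · apply hAp_cont.mul
      apply ContinuousOn.sub
      · exact contOn_log_div hAp_cont (hAp_cont.add hBp_cont) hAp_pos
          (fun w hw => by have := hAp_pos w hw; have := hBp_pos w hw; positivity)
      · exact contOn_log_div hAq_cont (hAq_cont.add hBq_cont) hAq_pos
          (fun w hw => by have := hAq_pos w hw; have := hBq_pos w hw; positivity)
    · apply hBp_cont.mul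
      apply ContinuousOn.sub
      · exact contOn_log_div hBp_cont (hAp_cont.add hBp_cont) hBp_pos
          (fun w hw => by have := hAp_pos w hw; have := hBp_pos w hw; positivity)
      · exact contOn_log_div hBq_cont (hAq_cont.add hBq_cont) hBq_pos
          (fun w hw => by have := hAq_pos w hw; have := hBq_pos w hw; positivity)
  -- integral of gibbsG vanishes
  have hint_pqT : IntegrableOn (fun w => cklIntegrand p q (swapYfn w)) unitBox4 :=
    swap_integrableOn hfin_pq
  have hint_ppT : IntegrableOn (fun w => cklIntegrand p p (swapYfn w)) unitBox4 :=
    swap_integrableOn hfin_pp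
  have hG0 : ∫ w in unitBox4, gibbsG p q w = 0 := by
    have h1 : ∫ w in unitBox4, (cklIntegrand p q w + cklIntegrand p q (swapYfn w)
        - cklIntegrand p p w - cklIntegrand p p (swapYfn w)) = 0 := by
      have hadd1 : IntegrableOn (fun w => cklIntegrand p q w + cklIntegrand p q (swapYfn w))
          unitBox4 := hfin_pq.add hint_pqT
      have hadd2 : IntegrableOn (fun w => cklIntegrand p p w + cklIntegrand p p (swapYfn w))
          unitBox4 := hfin_pp.add hint_ppT
      have e0 : (fun w : ℝ × ℝ × ℝ × ℝ => cklIntegrand p q w + cklIntegrand p q (swapYfn w)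
          - cklIntegrand p p w - cklIntegrand p p (swapYfn w))
          = fun w => (cklIntegrand p q w + cklIntegrand p q (swapYfn w))
            - (cklIntegrand p p w + cklIntegrand p p (swapYfn w)) := by funext w; ring
      rw [show (∫ w in unitBox4, (cklIntegrand p q w + cklIntegrand p q (swapYfn w)
            - cklIntegrand p p w - cklIntegrand p p (swapYfn w)))
          = ∫ w in unitBox4, ((cklIntegrand p q w + cklIntegrand p q (swapYfn w))
            - (cklIntegrand p p w + cklIntegrand p p (swapYfn w))) from by rw [e0],
        integral_sub hadd1 hadd2, integral_add hfin_pq hint_pqT, integral_add hfin_pp hint_ppT,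
        swap_setIntegral (cklIntegrand p q), swap_setIntegral (cklIntegrand p p)]
      unfold expCondKLScore at heq
      linarith [heq]
    calc ∫ w in unitBox4, gibbsG p q w
        = ∫ w in unitBox4, (cklIntegrand p q w + cklIntegrand p q (swapYfn w)
            - cklIntegrand p p w - cklIntegrand p p (swapYfn w)) :=
          setIntegral_congr_fun hbox4_meas (fun w _ => (ckl_combo_eq p q w).symm)
      _ = 0 := h1
  -- gibbsG vanishes pointwise
  have hGzero : ∀ w ∈ unitBox4, gibbsG p q w = 0 :=
    eq_zero_of_setIntegral_zero hbox4_meas hbox4_fin box4_ball_pos hGcont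
      (fun w hw => (gibbs_aux (hAp_pos w hw) (hBp_pos w hw) (hAq_pos w hw) (hBq_pos w hw)).1)
      (hGcont.integrableOn_compact hbox4_cpt) hG0
  -- the cross-ratio identity
  have hkey : ∀ x ∈ Icc (0:ℝ) 1, ∀ y ∈ Icc (0:ℝ) 1,
      p x y * p 0 0 * (q x 0 * q 0 y) = p x 0 * p 0 y * (q x y * q 0 0) := by
    intro x hx y hy
    have hw : ((x, y, 0, 0) : ℝ × ℝ × ℝ × ℝ) ∈ unitBox4 := ⟨hx, hy, h01, h01⟩
    have h0 := hGzero _ hw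
    have h2 := (gibbs_aux (hAp_pos _ hw) (hBp_pos _ hw) (hAq_pos _ hw) (hBq_pos _ hw)).2 h0
    simpa [boxA, boxB] using h2
  -- the log-linear identity
  have hFG : ∀ x ∈ Icc (0:ℝ) 1, ∀ y ∈ Icc (0:ℝ) 1,
      Real.log (p x y) - Real.log (q x y)
        = (Real.log (p x 0) - Real.log (q x 0))
          + ((Real.log (p 0 y) - Real.log (q 0 y)) + (Real.log (q 0 0) - Real.log (p 0 0))) := by
    intro x hx y hy
    have P1 := hp_pos x hx y hy
    have P2 := hp_pos 0 h01 0 h01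
    have P3 := hp_pos x hx 0 h01
    have P4 := hp_pos 0 h01 y hy
    have Q1 := hq_pos x hx y hy
    have Q2 := hq_pos 0 h01 0 h01
    have Q3 := hq_pos x hx 0 h01
    have Q4 := hq_pos 0 h01 y hy
    have hrel := congrArg Real.log (hkey x hx y hy)
    rw [Real.log_mul (mul_pos P1 P2).ne' (mul_pos Q3 Q4).ne',
      Real.log_mul P1.ne' P2.ne', Real.log_mul Q3.ne' Q4.ne',
      Real.log_mul (mul_pos P3 P4).ne' (mul_pos Q1 Q2).ne',
      Real.log_mul P3.ne' P4.ne', Real.log_mul Q1.ne' Q2.ne'] at hrel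
    linarith
  -- continuity of the slice functions
  have hpx0_cont : ContinuousOn (fun x : ℝ => p x 0) (Icc (0:ℝ) 1) :=
    hp_cont.comp (Continuous.continuousOn (by fun_prop : Continuous fun x : ℝ => (x, (0:ℝ))))
      fun x hx => ⟨hx, h01⟩
  have hqx0_cont : ContinuousOn (fun x : ℝ => q x 0) (Icc (0:ℝ) 1) :=
    hq_cont.comp (Continuous.continuousOn (by fun_prop : Continuous fun x : ℝ => (x, (0:ℝ))))
      fun x hx => ⟨hx, h01⟩
  have hp0y_cont : ContinuousOn (fun y : ℝ => p 0 y) (Icc (0:ℝ) 1) :=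
    hp_cont.comp (Continuous.continuousOn (by fun_prop : Continuous fun y : ℝ => ((0:ℝ), y)))
      fun y hy => ⟨h01, hy⟩
  have hq0y_cont : ContinuousOn (fun y : ℝ => q 0 y) (Icc (0:ℝ) 1) :=
    hq_cont.comp (Continuous.continuousOn (by fun_prop : Continuous fun y : ℝ => ((0:ℝ), y)))
      fun y hy => ⟨h01, hy⟩
  set F : ℝ → ℝ := fun x => Real.log (p x 0) - Real.log (q x 0) with hFdef
  set G : ℝ → ℝ := fun y => (Real.log (p 0 y) - Real.log (q 0 y))
    + (Real.log (q 0 0) - Real.log (p 0 0)) with hGdef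
  have hF_cont : ContinuousOn F (Icc (0:ℝ) 1) :=
    (hpx0_cont.log fun x hx => (hp_pos x hx 0 h01).ne').sub
      (hqx0_cont.log fun x hx => (hq_pos x hx 0 h01).ne')
  have hG_cont : ContinuousOn G (Icc (0:ℝ) 1) :=
    ((hp0y_cont.log fun y hy => (hp_pos 0 h01 y hy).ne').sub
      (hq0y_cont.log fun y hy => (hq_pos 0 h01 y hy).ne')).add continuousOn_const
  -- the 2D integrand
  set D2 : ℝ × ℝ → ℝ := fun z => (p z.1 z.2 - q z.1 z.2)
    * (Real.log (p z.1 z.2) - Real.log (q z.1 z.2)) with hD2def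
  have hD2_cont : ContinuousOn D2 (Icc (0:ℝ) 1 ×ˢ Icc (0:ℝ) 1) :=
    (hp_cont.sub hq_cont).mul
      ((hp_cont.log fun z hz => (hp_pos _ hz.1 _ hz.2).ne').sub
        (hq_cont.log fun z hz => (hq_pos _ hz.1 _ hz.2).ne'))
  have hD2_nn : ∀ z ∈ Icc (0:ℝ) 1 ×ˢ Icc (0:ℝ) 1, 0 ≤ D2 z := by
    intro z hz
    rcases le_total (p z.1 z.2) (q z.1 z.2) with hle | hle
    · have hl : Real.log (p z.1 z.2) ≤ Real.log (q z.1 z.2) :=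
        Real.log_le_log (hp_pos _ hz.1 _ hz.2) hle
      simp only [hD2def]
      nlinarith [mul_nonneg (sub_nonneg.2 hle) (sub_nonneg.2 hl)]
    · have hl : Real.log (q z.1 z.2) ≤ Real.log (p z.1 z.2) :=
        Real.log_le_log (hq_pos _ hz.1 _ hz.2) hle
      simp only [hD2def]
      nlinarith [mul_nonneg (sub_nonneg.2 hle) (sub_nonneg.2 hl)]
  -- auxiliary 2D integrands
  set f1 : ℝ × ℝ → ℝ := fun z => (p z.1 z.2 - q z.1 z.2) * F z.1 with hf1def
  set f2 : ℝ × ℝ → ℝ := fun z => (p z.1 z.2 - q z.1 z.2) * G z.2 with hf2def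
  have hf1_cont : ContinuousOn f1 (Icc (0:ℝ) 1 ×ˢ Icc (0:ℝ) 1) :=
    (hp_cont.sub hq_cont).mul
      (hF_cont.comp continuous_fst.continuousOn fun z hz => hz.1)
  have hf2_cont : ContinuousOn f2 (Icc (0:ℝ) 1 ×ˢ Icc (0:ℝ) 1) :=
    (hp_cont.sub hq_cont).mul
      (hG_cont.comp continuous_snd.continuousOn fun z hz => hz.2)
  have hf1_int : IntegrableOn f1 (Icc (0:ℝ) 1 ×ˢ Icc (0:ℝ) 1) :=
    hf1_cont.integrableOn_compact hbox2_cpt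
  have hf2_int : IntegrableOn f2 (Icc (0:ℝ) 1 ×ˢ Icc (0:ℝ) 1) :=
    hf2_cont.integrableOn_compact hbox2_cpt
  -- slice integrability
  have hslice_y : ∀ x ∈ Icc (0:ℝ) 1,
      IntegrableOn (fun y => p x y) (Icc (0:ℝ) 1) ∧ IntegrableOn (fun y => q x y) (Icc (0:ℝ) 1) := by
    intro x hx
    constructor
    · exact ((hp_cont.comp (Continuous.continuousOn (by fun_prop :
        Continuous fun y : ℝ => (x, y))) fun y hy => ⟨hx, hy⟩)).integrableOn_compact isCompact_Icc
    · exact ((hq_cont.comp (Continuous.continuousOn (by fun_prop :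
        Continuous fun y : ℝ => (x, y))) fun y hy => ⟨hx, hy⟩)).integrableOn_compact isCompact_Icc
  have hslice_x : ∀ y ∈ Icc (0:ℝ) 1,
      IntegrableOn (fun x => p x y) (Icc (0:ℝ) 1) ∧ IntegrableOn (fun x => q x y) (Icc (0:ℝ) 1) := by
    intro y hy
    constructor
    · exact ((hp_cont.comp (Continuous.continuousOn (by fun_prop :
        Continuous fun x : ℝ => (x, y))) fun x hx => ⟨hx, hy⟩)).integrableOn_compact isCompact_Icc
    · exact ((hq_cont.comp (Continuous.continuousOn (by fun_prop :
        Continuous fun x : ℝ => (x, y))) fun x hx => ⟨hx, hy⟩)).integrableOn_compact isCompact_Icc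
  -- the restricted product measure
  have hrestr : (volume : Measure (ℝ × ℝ)).restrict (Icc (0:ℝ) 1 ×ˢ Icc (0:ℝ) 1)
      = ((volume : Measure ℝ).restrict (Icc (0:ℝ) 1)).prod
        ((volume : Measure ℝ).restrict (Icc (0:ℝ) 1)) := by
    rw [Measure.volume_eq_prod, Measure.prod_restrict]
  -- first integral vanishes
  have hI1 : ∫ z in Icc (0:ℝ) 1 ×ˢ Icc (0:ℝ) 1, f1 z = 0 := by
    rw [show (∫ z in Icc (0:ℝ) 1 ×ˢ Icc (0:ℝ) 1, f1 z)
        = ∫ z, f1 z ∂(((volume : Measure ℝ).restrict (Icc (0:ℝ) 1)).prod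
          ((volume : Measure ℝ).restrict (Icc (0:ℝ) 1))) from by rw [← hrestr]]
    have hf1' : Integrable f1 (((volume : Measure ℝ).restrict (Icc (0:ℝ) 1)).prod
        ((volume : Measure ℝ).restrict (Icc (0:ℝ) 1))) := by
      rw [← hrestr]; exact hf1_int
    rw [integral_prod f1 hf1']
    have inner : ∀ x ∈ Icc (0:ℝ) 1, ∫ y in Icc (0:ℝ) 1, f1 (x, y) = 0 := by
      intro x hx
      have : (∫ y in Icc (0:ℝ) 1, f1 (x, y))
          = (∫ y in Icc (0:ℝ) 1, (p x y - q x y)) * F x := by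
        simp only [hf1def]
        exact integral_mul_const (F x) fun y => p x y - q x y
      rw [this, integral_sub (hslice_y x hx).1 (hslice_y x hx).2,
        hp_marg1 x hx, hq_marg1 x hx]
      ring
    calc (∫ x, ∫ y, f1 (x, y) ∂((volume : Measure ℝ).restrict (Icc (0:ℝ) 1))
          ∂((volume : Measure ℝ).restrict (Icc (0:ℝ) 1)))
        = ∫ x in Icc (0:ℝ) 1, (0:ℝ) := setIntegral_congr_fun measurableSet_Icc inner
      _ = 0 := by simp
  -- second integral vanishes
  have hI2 : ∫ z in Icc (0:ℝ) 1 ×ˢ Icc (0:ℝ) 1, f2 z = 0 := by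
    rw [show (∫ z in Icc (0:ℝ) 1 ×ˢ Icc (0:ℝ) 1, f2 z)
        = ∫ z, f2 z ∂(((volume : Measure ℝ).restrict (Icc (0:ℝ) 1)).prod
          ((volume : Measure ℝ).restrict (Icc (0:ℝ) 1))) from by rw [← hrestr]]
    have hf2' : Integrable f2 (((volume : Measure ℝ).restrict (Icc (0:ℝ) 1)).prod
        ((volume : Measure ℝ).restrict (Icc (0:ℝ) 1))) := by
      rw [← hrestr]; exact hf2_int
    rw [integral_prod_symm f2 hf2']
    have inner : ∀ y ∈ Icc (0:ℝ) 1, ∫ x in Icc (0:ℝ) 1, f2 (x, y) = 0 := by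
      intro y hy
      have : (∫ x in Icc (0:ℝ) 1, f2 (x, y))
          = (∫ x in Icc (0:ℝ) 1, (p x y - q x y)) * G y := by
        simp only [hf2def]
        exact integral_mul_const (G y) fun x => p x y - q x y
      rw [this, integral_sub (hslice_x y hy).1 (hslice_x y hy).2,
        hp_marg2 y hy, hq_marg2 y hy]
      ring
    calc (∫ y, ∫ x, f2 (x, y) ∂((volume : Measure ℝ).restrict (Icc (0:ℝ) 1))
          ∂((volume : Measure ℝ).restrict (Icc (0:ℝ) 1)))
        = ∫ y in Icc (0:ℝ) 1, (0:ℝ) := setIntegral_congr_fun measurableSet_Icc inner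
      _ = 0 := by simp
  -- the full 2D integral vanishes
  have hJ : ∫ z in Icc (0:ℝ) 1 ×ˢ Icc (0:ℝ) 1, D2 z = 0 := by
    have heq2 : EqOn D2 (fun z => f1 z + f2 z) (Icc (0:ℝ) 1 ×ˢ Icc (0:ℝ) 1) := by
      intro z hz
      simp only [hD2def, hf1def, hf2def]
      rw [hFG z.1 hz.1 z.2 hz.2]
      ring
    rw [setIntegral_congr_fun hbox2_meas heq2, integral_add hf1_int hf2_int, hI1, hI2]
    ring
  -- D2 vanishes pointwise
  have hD2zero : ∀ z ∈ Icc (0:ℝ) 1 ×ˢ Icc (0:ℝ) 1, D2 z = 0 :=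
    eq_zero_of_setIntegral_zero hbox2_meas hbox2_fin box2_ball_pos hD2_cont hD2_nn
      (hD2_cont.integrableOn_compact hbox2_cpt) hJ
  -- conclude
  intro x hx y hy
  have hz := hD2zero (x, y) ⟨hx, hy⟩
  simp only [hD2def] at hz
  by_contra hne
  rcases lt_or_gt_of_ne hne with hlt | hgt
  · have hl := Real.log_lt_log (hp_pos x hx y hy) hlt
    nlinarith [mul_pos (sub_pos.2 hlt) (sub_pos.2 hl)]
  · have hl := Real.log_lt_log (hq_pos x hx y hy) hgt
    nlinarith [mul_pos (sub_pos.2 hgt) (sub_pos.2 hl)]
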